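/- With the operator T of the previous context (resolvent-based primal-dual fixed-point operator with block-diagonal P = diag(θ I, ηγ I), θ, η > 0): if x* ∈ H and y* ∈ G satisfy −K*y* ∈ A(x*) and y* ∈ B(Kx*), then (x*, γKx* − τy*) is a fixed point of T, and moreover 0 ∈ A(x*) + K*B(Kx*). -/

import Mathlib

open scoped InnerProductSpace Pointwise
open ContinuousLinearMap

lemma resolvent_uniq {H : Type*} [NormedAddCommGroup H] [InnerProductSpace ℝ H]
    (A : H → Set H)
    (hA : ∀ x y u v : H, u ∈ A x → v ∈ A y → 0 ≤ ⟪x - y, u - v⟫_ℝ)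
    (c : ℝ) (hc : 0 < c) (s a b : H)
    (ha : c • (s - a) ∈ A a) (hb : c • (s - b) ∈ A b) : a = b := by
  have h := hA a b _ _ ha hb
  have heq : c • (s - a) - c • (s - b) = c • (b - a) := by
    rw [← smul_sub]; congr 1; abel
  rw [heq, real_inner_smul_right] at h
  have h2 : ⟪a - b, b - a⟫_ℝ = -‖a - b‖ ^ 2 := by
    rw [show b - a = -(a - b) by abel, inner_neg_right, real_inner_self_eq_norm_sq]
  rw [h2] at h
  have h3 : ‖a - b‖ ^ 2 ≤ 0 := by nlinarith
  have hn : ‖a - b‖ ^ 2 = 0 := le_antisymm h3 (sq_nonneg _)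
  exact sub_eq_zero.mp (norm_eq_zero.mp (pow_eq_zero_iff two_ne_zero |>.mp hn))

/-- Converse of the fixed-point characterization: if `x* ∈ H` and `y* ∈ G` satisfy
`−K*y* ∈ A(x*)` and `y* ∈ B(Kx*)`, then `(x*, γKx* − τy*)` is a fixed point of the
primal-dual operator `T(v,u) = (v,u) + P(x − v, w − Kx)` with
`x = J_{τA}(v − τK*(σKv − u/τ))`, `w = J_{B/σ}(Kv + Kx − u/γ)`,
`P = diag(θI, ηγI)`, `θ, η > 0`; moreover `0 ∈ A(x*) + K*B(Kx*)`.
The resolvents are encoded by their graph properties. -/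
theorem stmt7 {H G : Type*} [NormedAddCommGroup H] [InnerProductSpace ℝ H] [CompleteSpace H]
    [NormedAddCommGroup G] [InnerProductSpace ℝ G] [CompleteSpace G]
    (A : H → Set H) (B : G → Set G)
    (hA_mono : ∀ x y u v : H, u ∈ A x → v ∈ A y → 0 ≤ ⟪x - y, u - v⟫_ℝ)
    (hB_mono : ∀ x y u v : G, u ∈ B x → v ∈ B y → 0 ≤ ⟪x - y, u - v⟫_ℝ)
    (K : H →L[ℝ] G)
    (τ σ γ θ η : ℝ) (hτ : 0 < τ) (hσ : 0 < σ) (hγ : γ = τ * σ)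
    (hθ : 0 < θ) (hη : 0 < η)
    (JA : H → H) (JB : G → G)
    (hJA : ∀ s : H, τ⁻¹ • (s - JA s) ∈ A (JA s))
    (hJB : ∀ s : G, σ • (s - JB s) ∈ B (JB s))
    (xstar : H) (ystar : G)
    (hxy1 : -(adjoint K) ystar ∈ A xstar)
    (hxy2 : ystar ∈ B (K xstar))
    (ustar : G) (hustar : ustar = γ • K xstar - τ • ystar)
    (x : H) (w : G)
    (hx : x = JA (xstar - τ • (adjoint K) (σ • K xstar - τ⁻¹ • ustar)))
    (hw : w = JB (K xstar + K x - γ⁻¹ • ustar)) :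
    -- `(x*, u*)` is a fixed point of `T`:
    (xstar + θ • (x - xstar) = xstar ∧ ustar + (η * γ) • (w - K x) = ustar) ∧
      (0 : H) ∈ A xstar + (adjoint K) '' B (K xstar) := by
  have hγ0 : γ ≠ 0 := by rw [hγ]; positivity
  have hs : σ • K xstar - τ⁻¹ • ustar = ystar := by
    rw [hustar, smul_sub, smul_smul, smul_smul, hγ,
      inv_mul_cancel₀ hτ.ne', one_smul]
    have : τ⁻¹ * (τ * σ) = σ := by field_simp
    rw [this]; abel
  rw [hs] at hx
  -- x = xstar
  have hxx : x = xstar := by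
    refine resolvent_uniq A hA_mono τ⁻¹ (by positivity)
      (xstar - τ • (adjoint K) ystar) x xstar ?_ ?_
    · rw [hx]; exact hJA _
    · have : τ⁻¹ • (xstar - τ • (adjoint K) ystar - xstar) = -(adjoint K) ystar := by
        rw [show xstar - τ • (adjoint K) ystar - xstar = -(τ • (adjoint K) ystar) by abel,
          smul_neg, smul_smul, inv_mul_cancel₀ hτ.ne', one_smul]
      rw [this]; exact hxy1
  rw [hxx] at hw
  have hs' : σ • (K xstar + K xstar - γ⁻¹ • ustar - K xstar) = ystar := by
    rw [hustar, smul_sub (γ⁻¹), smul_smul, smul_smul, inv_mul_cancel₀ hγ0, one_smul]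
    have h1 : K xstar + K xstar - (K xstar - (γ⁻¹ * τ) • ystar) - K xstar
        = (γ⁻¹ * τ) • ystar := by abel
    rw [h1, smul_smul]
    have : σ * (γ⁻¹ * τ) = 1 := by rw [hγ]; field_simp
    rw [this, one_smul]
  -- w = K xstar
  have hww : w = K xstar := by
    refine resolvent_uniq B hB_mono σ hσ
      (K xstar + K xstar - γ⁻¹ • ustar) w (K xstar) ?_ ?_
    · rw [hw]; exact hJB _
    · rw [hs']; exact hxy2
  refine ⟨⟨by rw [hxx]; simp, by rw [hww, hxx]; simp⟩, ?_⟩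
  have h0 : (0 : H) = -(adjoint K) ystar + (adjoint K) ystar := by simp
  rw [h0]
  exact Set.add_mem_add hxy1 (Set.mem_image_of_mem _ hxy2)
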